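/- Let x_1,...,x_n be a median ordering of a tournament with no bad index, and let I be the set of indices i such that x_i → x_{i-2} is NOT an edge (where 1, 2 ∈ I by convention). If an index i+2 is not in I, then both i and i+1 are in I. Consequently, |I| ≥ ⌈2n/3⌉. -/

import Mathlib

/-- A tournament: irreflexive, and exactly one direction between distinct vertices. -/
def IsTournament {V : Type*} (T : V → V → Prop) : Prop :=
  (∀ v : V, ¬ T v v) ∧ ∀ u v : V, u ≠ v → (T u v ↔ ¬ T v u)

/-- `T` contains the k-th power of a directed path on `L` vertices. -/
def ContainsPathPower {V : Type*} (T : V → V → Prop) (k L : ℕ) : Prop :=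
  ∃ v : Fin L → V, Function.Injective v ∧
    ∀ i j : Fin L, (i : ℕ) < (j : ℕ) → (j : ℕ) ≤ (i : ℕ) + k → T (v i) (v j)
/-- Number of forward edges of the ordering `x 0, x 1, ..., x (n-1)`. -/
def fwdCount {n : ℕ} (T : Fin n → Fin n → Prop) [DecidableRel T]
    (x : Equiv.Perm (Fin n)) : ℕ :=
  (Finset.univ.filter fun p : Fin n × Fin n => p.1 < p.2 ∧ T (x p.1) (x p.2)).card

/-- A median ordering maximizes the number of forward edges. -/
def IsMedianOrdering {n : ℕ} (T : Fin n → Fin n → Prop) [DecidableRel T]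
    (x : Equiv.Perm (Fin n)) : Prop :=
  ∀ y : Equiv.Perm (Fin n), fwdCount T y ≤ fwdCount T x

lemma fwd_reindex {n : ℕ} (T : Fin n → Fin n → Prop) [DecidableRel T]
    (x σ : Equiv.Perm (Fin n)) :
    fwdCount T (σ.trans x) =
      (Finset.univ.filter fun p : Fin n × Fin n =>
        σ⁻¹ p.1 < σ⁻¹ p.2 ∧ T (x p.1) (x p.2)).card := by
  unfold fwdCount
  apply Finset.card_equiv (σ.prodCongr σ)
  intro p
  simp [Equiv.trans_apply]
  exact Finset.mem_filter.trans (by simp)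

lemma card_lt_aux {n : ℕ} (T : Fin n → Fin n → Prop) [DecidableRel T]
    (x σ : Equiv.Perm (Fin n)) (A B C D : Fin n)
    (hB : (B : ℕ) = (A : ℕ) + 1) (hC : (C : ℕ) = (A : ℕ) + 2) (hD : (D : ℕ) = (A : ℕ) + 3)
    (iA : σ⁻¹ A = B) (iB : σ⁻¹ B = D) (iC : σ⁻¹ C = A) (iD : σ⁻¹ D = C)
    (ifix : ∀ z : Fin n, ¬(z = A ∨ z = B ∨ z = C ∨ z = D) → σ⁻¹ z = z)
    (h1 : T (x C) (x A)) (h2 : T (x D) (x B))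
    (hnT1 : ¬ T (x A) (x C)) (hnT2 : ¬ T (x B) (x D)) :
    (Finset.univ.filter fun p : Fin n × Fin n => p.1 < p.2 ∧ T (x p.1) (x p.2)).card <
    (Finset.univ.filter fun p : Fin n × Fin n =>
        σ⁻¹ p.1 < σ⁻¹ p.2 ∧ T (x p.1) (x p.2)).card := by
  classical
  have hAB : A ≠ B := by simp [Fin.ext_iff]; omega
  have hAC : A ≠ C := by simp [Fin.ext_iff]; omega
  have hAD : A ≠ D := by simp [Fin.ext_iff]; omega
  have hBC : B ≠ C := by simp [Fin.ext_iff]; omega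
  have hBD : B ≠ D := by simp [Fin.ext_iff]; omega
  have hCD : C ≠ D := by simp [Fin.ext_iff]; omega
  have LAB : A < B := by rw [Fin.lt_def]; omega
  have LAC : A < C := by rw [Fin.lt_def]; omega
  have LAD : A < D := by rw [Fin.lt_def]; omega
  have LBC : B < C := by rw [Fin.lt_def]; omega
  have LBD : B < D := by rw [Fin.lt_def]; omega
  have LCD : C < D := by rw [Fin.lt_def]; omega
  have NAA : ¬ A < A := lt_irrefl A
  have NBB : ¬ B < B := lt_irrefl B
  have NCC : ¬ C < C := lt_irrefl C
  have NDD : ¬ D < D := lt_irrefl D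
  have NBA : ¬ B < A := by rw [Fin.lt_def]; omega
  have NCA : ¬ C < A := by rw [Fin.lt_def]; omega
  have NDA : ¬ D < A := by rw [Fin.lt_def]; omega
  have NCB : ¬ C < B := by rw [Fin.lt_def]; omega
  have NDB : ¬ D < B := by rw [Fin.lt_def]; omega
  have NDC : ¬ D < C := by rw [Fin.lt_def]; omega
  have h2v : ∀ z : Fin n, ¬(z = A ∨ z = B ∨ z = C ∨ z = D) →
      (z:ℕ) ≠ (A:ℕ) ∧ (z:ℕ) ≠ (B:ℕ) ∧ (z:ℕ) ≠ (C:ℕ) ∧ (z:ℕ) ≠ (D:ℕ) := by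
    intro z hz
    push_neg at hz
    obtain ⟨g1, g2, g3, g4⟩ := hz
    exact ⟨fun h => g1 (Fin.ext h), fun h => g2 (Fin.ext h),
      fun h => g3 (Fin.ext h), fun h => g4 (Fin.ext h)⟩
  have houtiff : ∀ p : Fin n × Fin n, ¬ ((p.1 = A ∨ p.1 = B ∨ p.1 = C ∨ p.1 = D) ∧
      (p.2 = A ∨ p.2 = B ∨ p.2 = C ∨ p.2 = D)) → (p.1 < p.2 ↔ σ⁻¹ p.1 < σ⁻¹ p.2) := by
    intro p hqp
    by_cases hp1 : (p.1 = A ∨ p.1 = B ∨ p.1 = C ∨ p.1 = D)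
    · have hp2 : ¬(p.2 = A ∨ p.2 = B ∨ p.2 = C ∨ p.2 = D) := fun h => hqp ⟨hp1, h⟩
      rw [ifix _ hp2]
      have hv2 := h2v _ hp2
      rcases hp1 with h|h|h|h <;> rw [h] <;>
        [rw [iA]; rw [iB]; rw [iC]; rw [iD]] <;>
        simp only [Fin.lt_def] <;> omega
    · rw [ifix _ hp1]
      have hv1 := h2v _ hp1
      by_cases hp2 : (p.2 = A ∨ p.2 = B ∨ p.2 = C ∨ p.2 = D)
      · rcases hp2 with h|h|h|h <;> rw [h] <;>
          [rw [iA]; rw [iB]; rw [iC]; rw [iD]] <;>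
          simp only [Fin.lt_def] <;> omega
      · rw [ifix _ hp2]
  have splitx := Finset.card_filter_add_card_filter_not
    (s := Finset.univ.filter fun p : Fin n × Fin n => p.1 < p.2 ∧ T (x p.1) (x p.2))
    (p := fun p : Fin n × Fin n => (p.1 = A ∨ p.1 = B ∨ p.1 = C ∨ p.1 = D) ∧
      (p.2 = A ∨ p.2 = B ∨ p.2 = C ∨ p.2 = D))
  have splity := Finset.card_filter_add_card_filter_not
    (s := Finset.univ.filter fun p : Fin n × Fin n => σ⁻¹ p.1 < σ⁻¹ p.2 ∧ T (x p.1) (x p.2))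
    (p := fun p : Fin n × Fin n => (p.1 = A ∨ p.1 = B ∨ p.1 = C ∨ p.1 = D) ∧
      (p.2 = A ∨ p.2 = B ∨ p.2 = C ∨ p.2 = D))
  have houteq :
      ((Finset.univ.filter fun p : Fin n × Fin n => p.1 < p.2 ∧ T (x p.1) (x p.2)).filter
        fun p : Fin n × Fin n => ¬ ((p.1 = A ∨ p.1 = B ∨ p.1 = C ∨ p.1 = D) ∧
          (p.2 = A ∨ p.2 = B ∨ p.2 = C ∨ p.2 = D))) =
      ((Finset.univ.filter fun p : Fin n × Fin n =>
          σ⁻¹ p.1 < σ⁻¹ p.2 ∧ T (x p.1) (x p.2)).filter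
        fun p : Fin n × Fin n => ¬ ((p.1 = A ∨ p.1 = B ∨ p.1 = C ∨ p.1 = D) ∧
          (p.2 = A ∨ p.2 = B ∨ p.2 = C ∨ p.2 = D))) := by
    ext p
    simp only [Finset.mem_filter, Finset.mem_univ, true_and]
    constructor
    · rintro ⟨⟨hlt, ht⟩, hnq⟩
      exact ⟨⟨(houtiff p hnq).mp hlt, ht⟩, hnq⟩
    · rintro ⟨⟨hlt, ht⟩, hnq⟩
      exact ⟨⟨(houtiff p hnq).mpr hlt, ht⟩, hnq⟩
  have hxin :
      ((Finset.univ.filter fun p : Fin n × Fin n => p.1 < p.2 ∧ T (x p.1) (x p.2)).filter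
        fun p : Fin n × Fin n => (p.1 = A ∨ p.1 = B ∨ p.1 = C ∨ p.1 = D) ∧
          (p.2 = A ∨ p.2 = B ∨ p.2 = C ∨ p.2 = D)) =
      (((insert A (insert B (insert C ({D} : Finset (Fin n))))) ×ˢ (insert A (insert B (insert C ({D} : Finset (Fin n)))))).filter
        fun p : Fin n × Fin n => p.1 < p.2 ∧ T (x p.1) (x p.2)) := by
    ext p
    simp only [Finset.mem_filter, Finset.mem_univ, true_and,
      Finset.mem_product, Finset.mem_insert, Finset.mem_singleton]
    exact and_comm
  have hyin :
      ((Finset.univ.filter fun p : Fin n × Fin n =>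
          σ⁻¹ p.1 < σ⁻¹ p.2 ∧ T (x p.1) (x p.2)).filter
        fun p : Fin n × Fin n => (p.1 = A ∨ p.1 = B ∨ p.1 = C ∨ p.1 = D) ∧
          (p.2 = A ∨ p.2 = B ∨ p.2 = C ∨ p.2 = D)) =
      (((insert A (insert B (insert C ({D} : Finset (Fin n))))) ×ˢ (insert A (insert B (insert C ({D} : Finset (Fin n)))))).filter
        fun p : Fin n × Fin n => σ⁻¹ p.1 < σ⁻¹ p.2 ∧ T (x p.1) (x p.2)) := by
    ext p
    simp only [Finset.mem_filter, Finset.mem_univ, true_and,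
      Finset.mem_product, Finset.mem_insert, Finset.mem_singleton]
    exact and_comm
  have m1 : A ∉ ({B, C, D} : Finset (Fin n)) := by
    simp only [Finset.mem_insert, Finset.mem_singleton]
    push_neg
    exact ⟨hAB, hAC, hAD⟩
  have m2 : B ∉ ({C, D} : Finset (Fin n)) := by
    simp only [Finset.mem_insert, Finset.mem_singleton]
    push_neg
    exact ⟨hBC, hBD⟩
  have m3 : C ∉ ({D} : Finset (Fin n)) := by
    simp only [Finset.mem_singleton]
    exact hCD
  have E1 : ∀ f : Fin n → ℕ,
      (∑ z ∈ ({A, B, C, D} : Finset (Fin n)), f z) = f A + (f B + (f C + f D)) := by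
    intro f
    rw [Finset.sum_insert m1, Finset.sum_insert m2, Finset.sum_insert m3, Finset.sum_singleton]
  have hkey :
      (((insert A (insert B (insert C ({D} : Finset (Fin n))))) ×ˢ (insert A (insert B (insert C ({D} : Finset (Fin n)))))).filter
        fun p : Fin n × Fin n => p.1 < p.2 ∧ T (x p.1) (x p.2)).card <
      (((insert A (insert B (insert C ({D} : Finset (Fin n))))) ×ˢ (insert A (insert B (insert C ({D} : Finset (Fin n)))))).filter
        fun p : Fin n × Fin n => σ⁻¹ p.1 < σ⁻¹ p.2 ∧ T (x p.1) (x p.2)).card := by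
    rw [Finset.card_filter, Finset.card_filter, Finset.sum_product, Finset.sum_product]
    simp only [E1]
    simp only [iA, iB, iC, iD, LAB, LAC, LAD, LBC, LBD, LCD, NAA, NBB, NCC, NDD,
      NBA, NCA, NDA, NCB, NDB, NDC, h1, h2, hnT1, hnT2,
      true_and, false_and, and_true, and_false, if_true, if_false]
    split_ifs <;> omega
  calc (Finset.univ.filter fun p : Fin n × Fin n => p.1 < p.2 ∧ T (x p.1) (x p.2)).card
      = _ + _ := splitx.symm
    _ < _ := by
        rw [hxin, hyin, houteq]
        exact Nat.add_lt_add_right hkey _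
    _ = _ := splity

lemma swap_contra {n : ℕ} (T : Fin n → Fin n → Prop) [DecidableRel T]
    (hT : IsTournament T) (x : Equiv.Perm (Fin n)) (hx : IsMedianOrdering T x)
    (A B C D : Fin n) (hB : (B : ℕ) = (A : ℕ) + 1) (hC : (C : ℕ) = (A : ℕ) + 2)
    (hD : (D : ℕ) = (A : ℕ) + 3)
    (h1 : T (x C) (x A)) (h2 : T (x D) (x B)) : False := by
  classical
  have hAB : A ≠ B := by simp [Fin.ext_iff]; omega
  have hAC : A ≠ C := by simp [Fin.ext_iff]; omega
  have hAD : A ≠ D := by simp [Fin.ext_iff]; omega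
  have hBC : B ≠ C := by simp [Fin.ext_iff]; omega
  have hBD : B ≠ D := by simp [Fin.ext_iff]; omega
  have hCD : C ≠ D := by simp [Fin.ext_iff]; omega
  have hxinj : Function.Injective x := x.injective
  have hnT1 : ¬ T (x A) (x C) :=
    (hT.2 (x C) (x A) (fun h => hAC (hxinj h).symm)).mp h1
  have hnT2 : ¬ T (x B) (x D) :=
    (hT.2 (x D) (x B) (fun h => hBD (hxinj h).symm)).mp h2
  set σ : Equiv.Perm (Fin n) := Equiv.swap A B * (Equiv.swap A D * Equiv.swap A C) with hσ
  have appσ : ∀ z, σ z = Equiv.swap A B (Equiv.swap A D (Equiv.swap A C z)) := fun z => rfl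
  have eA : σ A = C := by
    rw [appσ, Equiv.swap_apply_left, Equiv.swap_apply_of_ne_of_ne hAC.symm hCD,
      Equiv.swap_apply_of_ne_of_ne hAC.symm hBC.symm]
  have eB : σ B = A := by
    rw [appσ, Equiv.swap_apply_of_ne_of_ne hAB.symm hBC,
      Equiv.swap_apply_of_ne_of_ne hAB.symm hBD, Equiv.swap_apply_right]
  have eC : σ C = D := by
    rw [appσ, Equiv.swap_apply_right, Equiv.swap_apply_left,
      Equiv.swap_apply_of_ne_of_ne hAD.symm hBD.symm]
  have eD : σ D = B := by
    rw [appσ, Equiv.swap_apply_of_ne_of_ne hAD.symm hCD.symm, Equiv.swap_apply_right,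
      Equiv.swap_apply_left]
  have iC : σ⁻¹ C = A := by rw [← eA, Equiv.Perm.inv_def, Equiv.symm_apply_apply]
  have iA : σ⁻¹ A = B := by rw [← eB, Equiv.Perm.inv_def, Equiv.symm_apply_apply]
  have iD : σ⁻¹ D = C := by rw [← eC, Equiv.Perm.inv_def, Equiv.symm_apply_apply]
  have iB : σ⁻¹ B = D := by rw [← eD, Equiv.Perm.inv_def, Equiv.symm_apply_apply]
  have ifix : ∀ z : Fin n, ¬(z = A ∨ z = B ∨ z = C ∨ z = D) → σ⁻¹ z = z := by
    intro z hz
    push_neg at hz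
    obtain ⟨g1, g2, g3, g4⟩ := hz
    have : σ z = z := by
      rw [appσ, Equiv.swap_apply_of_ne_of_ne g1 g3, Equiv.swap_apply_of_ne_of_ne g1 g4,
        Equiv.swap_apply_of_ne_of_ne g1 g2]
    conv_lhs => rw [← this]
    exact Equiv.symm_apply_apply σ z
  have hlt := card_lt_aux T x σ A B C D hB hC hD iA iB iC iD ifix h1 h2 hnT1 hnT2
  have hle := hx (σ.trans x)
  rw [fwd_reindex] at hle
  unfold fwdCount at hle
  omega

theorem good_indices_dense {n : ℕ} (T : Fin n → Fin n → Prop) [DecidableRel T]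
    (hT : IsTournament T) (x : Equiv.Perm (Fin n)) (hx : IsMedianOrdering T x)
    (hbad : ∀ a : ℕ, (ha : a + 4 < n) →
      T (x ⟨a + 2, by omega⟩) (x ⟨a, by omega⟩) →
        ¬ T (x ⟨a + 4, ha⟩) (x ⟨a + 2, by omega⟩) ∧
        ¬ T (x ⟨a + 4, ha⟩) (x ⟨a + 1, by omega⟩))
    (I : Finset (Fin n))
    (hI : I = Finset.univ.filter fun i : Fin n =>
      (i : ℕ) < 2 ∨ ¬ T (x i) (x ⟨(i : ℕ) - 2, Nat.lt_of_le_of_lt (Nat.sub_le _ _) i.isLt⟩)) :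
    (∀ i : ℕ, (h2 : i + 2 < n) → (⟨i + 2, h2⟩ : Fin n) ∉ I →
      (⟨i, by omega⟩ : Fin n) ∈ I ∧ (⟨i + 1, by omega⟩ : Fin n) ∈ I) ∧
    (2 * n + 2) / 3 ≤ I.card := by
  have hmemI : ∀ j : Fin n, j ∈ I ↔
      ((j : ℕ) < 2 ∨ ¬ T (x j) (x ⟨(j : ℕ) - 2,
        Nat.lt_of_le_of_lt (Nat.sub_le _ _) j.isLt⟩)) := by
    subst hI
    intro j
    simp [Finset.mem_filter]
  have part1 : ∀ i : ℕ, (h2 : i + 2 < n) → (⟨i + 2, h2⟩ : Fin n) ∉ I →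
      (⟨i, by omega⟩ : Fin n) ∈ I ∧ (⟨i + 1, by omega⟩ : Fin n) ∈ I := by
    intro i h2 hni
    have hTi2 : T (x ⟨i + 2, h2⟩) (x ⟨i, by omega⟩) := by
      rw [hmemI] at hni
      push_neg at hni
      obtain ⟨-, hni⟩ := hni
      simp only [Fin.val_mk, Nat.add_sub_cancel] at hni
      exact hni
    constructor
    · rw [hmemI]
      by_cases hi2 : i < 2
      · exact Or.inl (by simpa using hi2)
      · refine Or.inr ?_
        intro hT0
        simp only [Fin.val_mk] at hT0
        have hb := hbad (i - 2) (by omega)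
        simp only [show i - 2 + 2 = i from by omega, show i - 2 + 4 = i + 2 from by omega,
          show i - 2 + 1 = i - 1 from by omega] at hb
        exact (hb hT0).1 hTi2
    · rw [hmemI]
      by_cases hi1 : i + 1 < 2
      · exact Or.inl (by simpa using hi1)
      · refine Or.inr ?_
        intro hT1
        simp only [Fin.val_mk, show i + 1 - 2 = i - 1 from by omega] at hT1
        exact swap_contra T hT x hx ⟨i - 1, by omega⟩ ⟨i, by omega⟩ ⟨i + 1, by omega⟩
          ⟨i + 2, h2⟩ (by simp only [Fin.val_mk]; omega) (by simp only [Fin.val_mk]; omega)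
          (by simp only [Fin.val_mk]; omega) hT1 hTi2
  refine ⟨part1, ?_⟩
  by_cases hn : n ≤ 2
  · have hIuniv : I = Finset.univ := by
      apply Finset.eq_univ_iff_forall.mpr
      intro j
      rw [hmemI]
      exact Or.inl (by have := j.isLt; omega)
    rw [hIuniv, Finset.card_univ, Fintype.card_fin]
    omega
  · push_neg at hn
    have hJmem : ∀ j : Fin n, j ∉ I → 2 ≤ (j : ℕ) ∧
        (∀ h2 : (j : ℕ) - 2 < n, (⟨(j : ℕ) - 2, h2⟩ : Fin n) ∈ I) ∧
        (∀ h1 : (j : ℕ) - 1 < n, (⟨(j : ℕ) - 1, h1⟩ : Fin n) ∈ I) := by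
      intro j hj
      have hj2 : 2 ≤ (j : ℕ) := by
        by_contra h
        exact hj ((hmemI j).mpr (Or.inl (by omega)))
      have h2' : ((j : ℕ) - 2) + 2 < n := by omega
      have hne : (⟨(j : ℕ) - 2 + 2, h2'⟩ : Fin n) = j :=
        Fin.ext (by simp only [Fin.val_mk]; omega)
      have hp := part1 ((j : ℕ) - 2) h2' (by rw [hne]; exact hj)
      refine ⟨hj2, fun _ => hp.1, fun h1 => ?_⟩
      have he2 : (⟨(j : ℕ) - 2 + 1, by omega⟩ : Fin n) = (⟨(j : ℕ) - 1, h1⟩ : Fin n) :=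
        Fin.ext (by simp only [Fin.val_mk]; omega)
      rw [← he2]
      exact hp.2
    classical
    have hcompl := Finset.card_add_card_compl I
    rw [Fintype.card_fin] at hcompl
    have hcard : Iᶜ.card ≤ (n - 3) / 3 + 1 := by
      have hr := Finset.card_range ((n - 3) / 3 + 1)
      rw [← hr]
      apply Finset.card_le_card_of_injOn (fun j : Fin n => ((j : ℕ) - 2) / 3)
      · intro j hj
        simp only [Finset.mem_coe, Finset.mem_range]
        have hj' : j ∉ I := Finset.mem_compl.mp hj
        have := (hJmem j hj').1
        have := j.isLt
        omega
      · intro j hj k hk heq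
        simp only at heq
        have hj' : j ∉ I := Finset.mem_compl.mp (Finset.mem_coe.mp hj)
        have hk' : k ∉ I := Finset.mem_compl.mp (Finset.mem_coe.mp hk)
        obtain ⟨hj2, hjm2, hjm1⟩ := hJmem j hj'
        obtain ⟨hk2, hkm2, hkm1⟩ := hJmem k hk'
        have hjlt := j.isLt
        have hklt := k.isLt
        by_contra hne
        rcases Nat.lt_trichotomy (j : ℕ) (k : ℕ) with h | h | h
        · have e2 : (j : ℕ) ≠ (k : ℕ) - 2 := fun he => hj'
            (by rw [show j = (⟨(k : ℕ) - 2, by omega⟩ : Fin n) from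
              Fin.ext (by simp only [Fin.val_mk]; omega)]; exact hkm2 (by omega))
          have e1 : (j : ℕ) ≠ (k : ℕ) - 1 := fun he => hj'
            (by rw [show j = (⟨(k : ℕ) - 1, by omega⟩ : Fin n) from
              Fin.ext (by simp only [Fin.val_mk]; omega)]; exact hkm1 (by omega))
          omega
        · exact hne (Fin.ext h)
        · have e2 : (k : ℕ) ≠ (j : ℕ) - 2 := fun he => hk'
            (by rw [show k = (⟨(j : ℕ) - 2, by omega⟩ : Fin n) from
              Fin.ext (by simp only [Fin.val_mk]; omega)]; exact hjm2 (by omega))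
          have e1 : (k : ℕ) ≠ (j : ℕ) - 1 := fun he => hk'
            (by rw [show k = (⟨(j : ℕ) - 1, by omega⟩ : Fin n) from
              Fin.ext (by simp only [Fin.val_mk]; omega)]; exact hjm1 (by omega))
          omega
    omega
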